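/- The subspace vanishing polynomials defined by the Cantor basis and by the tower basis coincide: if (β_i) is a Cantor basis and (v_i) the tower basis of a common field F of characteristic 2, and both satisfy s_k(β_k) = 1 (resp. s_k(v_k) = 1) with s_{k+1} = s_k² + s_k and s₁(x) = x²+x, then for every k, span{β₀,…,β_{k−1}} = span{v₀,…,v_{k−1}} and the polynomials ∏_{a∈V_k}(x−a) agree. -/

import Mathlib

open Polynomial Finset

private noncomputable def pIter (F : Type*) [Field F] : ℕ → Polynomial F
  | 0 => Polynomial.X
  | k + 1 => (pIter F k) ^ 2 + pIter F k

private lemma pIter_monic (F : Type*) [Field F] (k : ℕ) :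
    (pIter F k).Monic ∧ (pIter F k).natDegree = 2 ^ k := by
  induction k with
  | zero => exact ⟨monic_X, natDegree_X⟩
  | succ k ih =>
    obtain ⟨hm, hd⟩ := ih
    have hm2 : ((pIter F k) ^ 2).Monic := hm.pow 2
    have hd2 : ((pIter F k) ^ 2).natDegree = 2 ^ (k + 1) := by
      rw [hm.natDegree_pow, hd]; ring
    have hlt : (pIter F k).natDegree < ((pIter F k) ^ 2).natDegree := by
      rw [hd2, hd]; exact Nat.pow_lt_pow_succ (by norm_num)
    have hltd : (pIter F k).degree < ((pIter F k) ^ 2).degree := by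
      rw [degree_eq_natDegree hm2.ne_zero]
      calc (pIter F k).degree ≤ (pIter F k).natDegree := degree_le_natDegree
        _ < ((pIter F k) ^ 2).natDegree := by exact_mod_cast hlt
    refine ⟨hm2.add_of_left hltd, ?_⟩
    show ((pIter F k) ^ 2 + pIter F k).natDegree = 2 ^ (k + 1)
    rw [natDegree_add_eq_left_of_natDegree_lt hlt, hd2]

private lemma pIter_eval (F : Type*) [Field F] (k : ℕ) (y : F) :
    (pIter F k).eval y = (fun z : F => z ^ 2 + z)^[k] y := by
  induction k with
  | zero => simp [pIter]
  | succ k ih =>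
    rw [Function.iterate_succ_apply', pIter]
    simp [ih]

private lemma sum_inj_of_indep {F : Type*} [Field F] [CharP F 2]
    (w : ℕ → F) (hindep : ∀ S : Finset ℕ, (∑ j ∈ S, w j) = 0 → S = ∅)
    {S T : Finset ℕ} (h : (∑ j ∈ S, w j) = ∑ j ∈ T, w j) : S = T := by
  have hd : Disjoint (S \ T) (T \ S) := disjoint_sdiff_sdiff
  have hsum : (∑ j ∈ (S \ T) ∪ (T \ S), w j) = 0 := by
    rw [Finset.sum_union hd]
    have h1 : (∑ j ∈ S ∩ T, w j) + ∑ j ∈ S \ T, w j = ∑ j ∈ S, w j :=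
      Finset.sum_inter_add_sum_sdiff S T w
    have h2 : (∑ j ∈ T ∩ S, w j) + ∑ j ∈ T \ S, w j = ∑ j ∈ T, w j :=
      Finset.sum_inter_add_sum_sdiff T S w
    rw [Finset.inter_comm] at h2
    have := h1.trans (h.trans h2.symm)
    have h3 : (∑ j ∈ S \ T, w j) = ∑ j ∈ T \ S, w j := by
      exact add_left_cancel this
    rw [h3, CharTwo.add_self_eq_zero]
  have := hindep _ hsum
  obtain ⟨h4, h5⟩ := Finset.union_eq_empty.mp this
  exact Finset.Subset.antisymm (Finset.sdiff_eq_empty_iff_subset.mp h4)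
    (Finset.sdiff_eq_empty_iff_subset.mp h5)

/-- The subspace vanishing polynomials defined by a Cantor basis and by the tower
basis coincide.  Let `F` be a field of characteristic 2 containing a Cantor basis
`(β_i)` (`β₀ = 1`, `β_i² + β_i = β_{i−1}`, `GF(2)`-linearly independent) and the
tower basis `(v_i)` (built from elements `x_j` with
`x_{m+1}² + x_{m+1} = x₁⋯x_m`, `v_k = ∏_{j : bit j of k} x_{j+1}`, linearly
independent), where both satisfy `s_k(β_k) = 1` and `s_k(v_k) = 1` for the
iterates `s_k` of `s₁(x) = x² + x`.  Then for every `k`,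
`span{β₀,…,β_{k−1}} = span{v₀,…,v_{k−1}}` and the vanishing polynomials
`∏_{a ∈ V_k}(x − a)` agree. -/
theorem stmt_16 (F : Type*) [Field F] [CharP F 2] [DecidableEq F]
    (β : ℕ → F) (hβ0 : β 0 = 1) (hβ : ∀ i, β (i + 1) ^ 2 + β (i + 1) = β i)
    (hβindep : ∀ S : Finset ℕ, (∑ j ∈ S, β j) = 0 → S = ∅)
    (x : ℕ → F)
    (hx : ∀ m, x (m + 1) ^ 2 + x (m + 1) = ∏ j ∈ Finset.range m, x (j + 1))
    (v : ℕ → F)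
    (hv : ∀ k, v k = ∏ j ∈ Finset.range k, if k.testBit j then x (j + 1) else 1)
    (hvindep : ∀ S : Finset ℕ, (∑ j ∈ S, v j) = 0 → S = ∅)
    (s1 : F → F) (hs1 : ∀ y, s1 y = y ^ 2 + y)
    (hsβ : ∀ k, s1^[k] (β k) = 1) (hsv : ∀ k, s1^[k] (v k) = 1) :
    ∀ k, ((Finset.range k).powerset).image (fun S => ∑ j ∈ S, β j)
          = ((Finset.range k).powerset).image (fun S => ∑ j ∈ S, v j) ∧
      ∀ y : F,
        ∏ a ∈ ((Finset.range k).powerset).image (fun S => ∑ j ∈ S, β j), (y - a)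
          = ∏ a ∈ ((Finset.range k).powerset).image (fun S => ∑ j ∈ S, v j), (y - a) := by
  have hs1f : s1 = fun z : F => z ^ 2 + z := funext hs1
  subst hs1f
  set f : F → F := fun z : F => z ^ 2 + z with hf
  have htwo : (2 : F) = 0 := by
    have := CharP.cast_eq_zero F 2
    exact_mod_cast this
  have hf0 : f 0 = 0 := by simp [hf]
  have hf1 : f 1 = 0 := by
    simp only [hf, one_pow]
    rw [← htwo]; norm_num
  have hfadd : ∀ y z : F, f (y + z) = f y + f z := by
    intro y z
    have : (y + z) ^ 2 + (y + z) = y ^ 2 + y + (z ^ 2 + z) + 2 * (y * z) := by ring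
    simp only [hf, this, htwo, zero_mul, add_zero]
  have hiter_add : ∀ k (y z : F), f^[k] (y + z) = f^[k] y + f^[k] z := by
    intro k
    induction k with
    | zero => simp
    | succ k ih =>
      intro y z
      rw [Function.iterate_succ_apply', Function.iterate_succ_apply',
        Function.iterate_succ_apply', ih, hfadd]
  have hiter0 : ∀ k, f^[k] (0 : F) = 0 := fun k => Function.iterate_fixed hf0 k
  have hiter_sum : ∀ k (S : Finset ℕ) (g : ℕ → F),
      f^[k] (∑ j ∈ S, g j) = ∑ j ∈ S, f^[k] (g j) := by
    intro k S g
    induction S using Finset.induction_on with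
    | empty => simp [hiter0]
    | insert _ _ hnot ih => rw [Finset.sum_insert hnot, Finset.sum_insert hnot, hiter_add, ih]
  -- for any w with s_j(w j) = 1, f^[k] (w j) = 0 for j < k
  have key : ∀ (w : ℕ → F), (∀ j, f^[j] (w j) = 1) → ∀ {j k}, j < k → f^[k] (w j) = 0 := by
    intro w hw j k hjk
    have hk : (k - j - 1) + 1 + j = k := by omega
    rw [← hk, Function.iterate_add_apply, hw j, Function.iterate_add_apply,
      Function.iterate_one, hf1, hiter0]
  -- each subset sum lies in the roots of pIter F k
  have hroots : ∀ k (w : ℕ → F), (∀ j, f^[j] (w j) = 1) →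
      ((Finset.range k).powerset).image (fun S => ∑ j ∈ S, w j)
        ⊆ (pIter F k).roots.toFinset := by
    intro k w hw
    intro a ha
    simp only [Finset.mem_image, Finset.mem_powerset] at ha
    obtain ⟨S, hS, rfl⟩ := ha
    rw [Multiset.mem_toFinset, mem_roots ((pIter_monic F k).1.ne_zero)]
    rw [IsRoot, pIter_eval, hiter_sum]
    apply Finset.sum_eq_zero
    intro j hj
    exact key w hw (Finset.mem_range.mp (hS hj))
  have hcard_roots : ∀ k, ((pIter F k).roots.toFinset).card ≤ 2 ^ k := by
    intro k
    calc ((pIter F k).roots.toFinset).card ≤ Multiset.card (pIter F k).roots :=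
          Multiset.toFinset_card_le _
      _ ≤ (pIter F k).natDegree := Polynomial.card_roots' _
      _ = 2 ^ k := (pIter_monic F k).2
  have himg_card : ∀ k (w : ℕ → F), (∀ S : Finset ℕ, (∑ j ∈ S, w j) = 0 → S = ∅) →
      (((Finset.range k).powerset).image (fun S => ∑ j ∈ S, w j)).card = 2 ^ k := by
    intro k w hindep
    rw [Finset.card_image_of_injOn, Finset.card_powerset, Finset.card_range]
    intro S _ T _ h
    exact sum_inj_of_indep w hindep h
  have heqroots : ∀ (w : ℕ → F), (∀ j, f^[j] (w j) = 1) →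
      (∀ S : Finset ℕ, (∑ j ∈ S, w j) = 0 → S = ∅) →
      ∀ k, ((Finset.range k).powerset).image (fun S => ∑ j ∈ S, w j)
        = (pIter F k).roots.toFinset := by
    intro w hw hindep k
    apply Finset.eq_of_subset_of_card_le (hroots k w hw)
    rw [himg_card k w hindep]
    exact hcard_roots k
  intro k
  have hmain : ((Finset.range k).powerset).image (fun S => ∑ j ∈ S, β j)
      = ((Finset.range k).powerset).image (fun S => ∑ j ∈ S, v j) := by
    rw [heqroots β hsβ hβindep k, heqroots v hsv hvindep k]
  exact ⟨hmain, fun y => by rw [hmain]⟩
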